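/- Let m ≥ 1 be an integer and ν = 2m − 1. The weight polynomial w_ν(x) = Σ_{j=1}^{ν} j(−x)^{j−1} satisfies w_ν(x) > 0 for all x ∈ [0,1], w_ν(0) = 1, and w_ν(1) = m; moreover, for all integers k, l ≥ 0 the transmuted Legendre polynomials satisfy ∫₀¹ w_ν(x) 𝒫_{νk}(x) 𝒫_{νl}(x) dx = δ_{kl}/(2k+1). -/

import Mathlib

open Polynomial MeasureTheory Real Filter

/-- The Legendre polynomial of degree `n`, via the Rodrigues formula
`P_n(x) = 1/(2^n n!) dⁿ/dxⁿ (x² - 1)ⁿ`. -/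
noncomputable def legendre (n : ℕ) : Polynomial ℝ :=
  (1 / (2 ^ n * n.factorial) : ℝ) • derivative^[n] ((X ^ 2 - 1) ^ n)

/-- The shifted Legendre polynomial `P̃_n(x) = P_n(2x - 1)` on `[0,1]`. -/
noncomputable def shiftedLegendre (n : ℕ) (x : ℝ) : ℝ :=
  (legendre n).eval (2 * x - 1)

/-- The transmuted Legendre polynomial `𝒫_{νn}(x)`: `𝒫_{ν0} = 1` and
`𝒫_{νn}(x) = P̃_n(1 + ∑_{j=1}^{ν} (-x)^j)` for `n ≥ 1`. -/
noncomputable def transmutedLegendre (ν n : ℕ) (x : ℝ) : ℝ :=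
  if n = 0 then 1 else shiftedLegendre n (1 + ∑ j ∈ Finset.Icc 1 ν, (-x) ^ j)

/-- The weight polynomial `w_ν(x) = ∑_{j=1}^{ν} j (-x)^{j-1}`. -/
noncomputable def transmutedWeight (ν : ℕ) (x : ℝ) : ℝ :=
  ∑ j ∈ Finset.Icc 1 ν, (j : ℝ) * (-x) ^ (j - 1)

noncomputable abbrev PP (n : ℕ) : Polynomial ℝ := ((X:Polynomial ℝ)^2 - 1)^n

lemma PP_monic (n : ℕ) : (PP n).Monic := by
  have : ((X:Polynomial ℝ)^2 - 1) = X^2 - C 1 := by simp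
  exact (this ▸ (monic_X_pow_sub_C (1:ℝ) two_ne_zero)).pow n

lemma PP_natDegree (n : ℕ) : (PP n).natDegree = 2*n := by
  have : ((X:Polynomial ℝ)^2 - 1) = X^2 - C 1 := by simp
  rw [PP, this, natDegree_pow, natDegree_X_pow_sub_C, mul_comm]

lemma PP_ne_zero (n : ℕ) : PP n ≠ 0 := (PP_monic n).ne_zero

lemma PP_deriv_root (n j : ℕ) (hj : j < n) {a : ℝ} (ha : a^2 = 1) :
    (derivative^[j] (PP n)).eval a = 0 := by
  apply isRoot_iterate_derivative_of_lt_rootMultiplicity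
  have hdvd : ((X - C a)^n : Polynomial ℝ) ∣ PP n := by
    apply pow_dvd_pow_of_dvd
    rw [dvd_iff_isRoot]
    simp [IsRoot, ha]
  exact lt_of_lt_of_le hj ((le_rootMultiplicity_iff (PP_ne_zero n)).mpr hdvd)

lemma PP_top_deriv (n : ℕ) : derivative^[2*n] (PP n) = C (((2*n).factorial : ℝ)) := by
  have hd : (derivative^[2*n] (PP n)).natDegree = 0 := by
    have h := natDegree_iterate_derivative (PP n) (2*n)
    rw [PP_natDegree] at h
    omega
  rw [eq_C_of_natDegree_eq_zero hd, coeff_iterate_derivative]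
  congr 1
  simp only [zero_add]
  rw [show (PP n).coeff (2*n) = (PP n).leadingCoeff by rw [leadingCoeff, PP_natDegree],
    (PP_monic n).leadingCoeff]
  simp [Nat.descFactorial_self]

lemma ibp_iterate (n : ℕ) (q : Polynomial ℝ) : ∀ j, j ≤ n →
    (∫ x in (-1:ℝ)..1, (derivative^[n] (PP n)).eval x * q.eval x)
    = (-1:ℝ)^j * ∫ x in (-1:ℝ)..1,
        (derivative^[n-j] (PP n)).eval x * (derivative^[j] q).eval x := by
  intro j
  induction j with
  | zero => intro _; simp
  | succ j ih =>
    intro hj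
    rw [ih (le_of_lt hj)]
    have hnj : n - j = (n - (j+1)) + 1 := by omega
    set u : ℝ → ℝ := fun x => (derivative^[j] q).eval x
    set u' : ℝ → ℝ := fun x => (derivative^[j+1] q).eval x
    set v : ℝ → ℝ := fun x => (derivative^[n-(j+1)] (PP n)).eval x
    set v' : ℝ → ℝ := fun x => (derivative^[n-j] (PP n)).eval x
    have hu : ∀ x ∈ Set.uIcc (-1:ℝ) 1, HasDerivAt u (u' x) x := by
      intro x _
      simpa [u, u', Function.iterate_succ_apply'] using
        (derivative^[j] q).hasDerivAt x
    have hv : ∀ x ∈ Set.uIcc (-1:ℝ) 1, HasDerivAt v (v' x) x := by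
      intro x _
      have := (derivative^[n-(j+1)] (PP n)).hasDerivAt x
      simpa [v, v', hnj, Function.iterate_succ_apply'] using this
    have hui : IntervalIntegrable u' volume (-1:ℝ) 1 :=
      ((derivative^[j+1] q).continuous_aeval).intervalIntegrable _ _
    have hvi : IntervalIntegrable v' volume (-1:ℝ) 1 :=
      ((derivative^[n-j] (PP n)).continuous_aeval).intervalIntegrable _ _
    have key := intervalIntegral.integral_mul_deriv_eq_deriv_mul hu hv hui hvi
    have hv1 : v 1 = 0 := PP_deriv_root n _ (by omega) (by norm_num)
    have hvm1 : v (-1) = 0 := PP_deriv_root n _ (by omega) (by norm_num)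
    rw [hv1, hvm1] at key
    simp only [mul_zero, zero_sub, sub_zero, zero_mul, neg_neg] at key
    have : (∫ x in (-1:ℝ)..1, v' x * u x) = - ∫ x in (-1:ℝ)..1, v x * u' x := by
      rw [show (∫ x in (-1:ℝ)..1, v' x * u x) = ∫ x in (-1:ℝ)..1, u x * v' x from by
        simp_rw [mul_comm],
        key,
        show (∫ x in (-1:ℝ)..1, v x * u' x) = ∫ x in (-1:ℝ)..1, u' x * v x from by
        simp_rw [mul_comm]]
    calc (-1:ℝ)^j * ∫ x in (-1:ℝ)..1, v' x * u x
        = (-1:ℝ)^j * (- ∫ x in (-1:ℝ)..1, v x * u' x) := by rw [this]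
      _ = (-1:ℝ)^(j+1) * ∫ x in (-1:ℝ)..1, v x * u' x := by ring

lemma sq_sub_one_integral : ∀ n : ℕ, ∫ x in (-1:ℝ)..1, (x^2-1)^n =
    (-1:ℝ)^n * (2^(2*n+1) * (n.factorial:ℝ)^2 / ((2*n+1).factorial)) := by
  intro n
  induction n with
  | zero => norm_num
  | succ n ih =>
    -- FTC: derivative of x * (x^2-1)^(n+1)
    have hderiv : ∀ x : ℝ, HasDerivAt (fun x : ℝ => x * (x^2-1)^(n+1))
        ((2*n+3) * (x^2-1)^(n+1) + (2*(n+1)) * (x^2-1)^n) x := by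
      intro x
      have h1 : HasDerivAt (fun x : ℝ => x * (x^2-1)^(n+1))
          (1 * (x^2-1)^(n+1) + x * ((n+1) * (x^2-1)^n * (2*x))) x := by
        exact (hasDerivAt_id x).mul
          (((hasDerivAt_pow 2 x).sub_const 1).pow (n+1) |>.congr_deriv (by
            push_cast; ring))
      convert h1 using 1
      have hx : (x:ℝ)^2 = (x^2 - 1) + 1 := by ring
      have : x * ((n+1) * (x^2-1)^n * (2*x)) = 2*(n+1) * x^2 * (x^2-1)^n := by ring
      rw [this, hx]
      push_cast
      ring
    have hFTC := intervalIntegral.integral_eq_sub_of_hasDerivAt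
      (f := fun x : ℝ => x * (x^2-1)^(n+1))
      (f' := fun x => (2*(n:ℝ)+3) * (x^2-1)^(n+1) + (2*((n:ℝ)+1)) * (x^2-1)^n)
      (a := -1) (b := 1) (fun x _ => by simpa using hderiv x)
      (by apply Continuous.intervalIntegrable; continuity)
    have hsplit : (∫ x in (-1:ℝ)..1, ((2*(n:ℝ)+3) * (x^2-1)^(n+1) + (2*((n:ℝ)+1)) * (x^2-1)^n))
        = (2*(n:ℝ)+3) * (∫ x in (-1:ℝ)..1, (x^2-1)^(n+1)) + (2*((n:ℝ)+1)) * ∫ x in (-1:ℝ)..1, (x^2-1)^n := by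
      rw [intervalIntegral.integral_add, intervalIntegral.integral_const_mul,
        intervalIntegral.integral_const_mul] <;>
      · apply Continuous.intervalIntegrable; continuity
    rw [hsplit] at hFTC
    simp only [one_pow, neg_one_sq] at hFTC
    norm_num at hFTC
    have h3 : (2*(n:ℝ)+3) ≠ 0 := by positivity
    have : (∫ x in (-1:ℝ)..1, (x^2-1)^(n+1)) = -(2*((n:ℝ)+1)) * (∫ x in (-1:ℝ)..1, (x^2-1)^n) / (2*(n:ℝ)+3) := by
      field_simp
      linarith [hFTC]
    rw [this, ih]
    have e1 : ((2*(n+1)+1).factorial : ℝ) = (2*(n:ℝ)+3) * ((2*(n:ℝ)+2) * (2*n+1).factorial) := by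
      rw [show 2*(n+1)+1 = (2*n+1)+1+1 from by ring, Nat.factorial_succ, Nat.factorial_succ]
      push_cast; ring
    have e2 : ((n+1).factorial : ℝ) = ((n:ℝ)+1) * n.factorial := by
      rw [Nat.factorial_succ]; push_cast; ring
    rw [e1, e2]
    have hf1 : ((2*n+1).factorial : ℝ) ≠ 0 := by positivity
    push_cast
    field_simp
    ring

lemma legendre_orth_le {k l : ℕ} (hkl : k ≤ l) :
    ∫ x in (-1:ℝ)..1, (legendre k).eval x * (legendre l).eval x
      = if k = l then 2/(2*(l:ℝ)+1) else 0 := by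
  have ck : (legendre k) = (1 / (2 ^ k * k.factorial) : ℝ) • derivative^[k] (PP k) := rfl
  have cl : (legendre l) = (1 / (2 ^ l * l.factorial) : ℝ) • derivative^[l] (PP l) := rfl
  have hpull : ∫ x in (-1:ℝ)..1, (legendre k).eval x * (legendre l).eval x
      = (1 / (2 ^ k * k.factorial) : ℝ) * (1 / (2 ^ l * l.factorial) : ℝ) *
        ∫ x in (-1:ℝ)..1, (derivative^[l] (PP l)).eval x * (derivative^[k] (PP k)).eval x := by
    rw [← intervalIntegral.integral_const_mul]
    apply intervalIntegral.integral_congr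
    intro x _
    rw [ck, cl]; simp [eval_smul]; ring
  rw [hpull, ibp_iterate l (derivative^[k] (PP k)) l le_rfl]
  simp only [Nat.sub_self, Function.iterate_zero_apply]
  have hiter : derivative^[l] (derivative^[k] (PP k)) = derivative^[l+k] (PP k) := by
    rw [← Function.iterate_add_apply]
  rw [hiter]
  rcases lt_or_eq_of_le hkl with hlt | heq
  · have hzero : derivative^[l+k] (PP k) = 0 := by
      apply iterate_derivative_eq_zero
      rw [PP_natDegree]; omega
    rw [hzero]
    simp [if_neg (Nat.ne_of_lt hlt)]
  · subst heq
    rw [show k + k = 2*k from by ring, PP_top_deriv]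
    have : (∫ x in (-1:ℝ)..1, (PP k).eval x * (C (((2*k).factorial : ℝ))).eval x)
        = ((2*k).factorial : ℝ) * ∫ x in (-1:ℝ)..1, (x^2-1)^k := by
      rw [← intervalIntegral.integral_const_mul]
      apply intervalIntegral.integral_congr
      intro x _; simp [PP]; ring
    rw [this, sq_sub_one_integral k]
    rw [if_pos rfl]
    have h1 : ((2*k+1).factorial : ℝ) = (2*(k:ℝ)+1) * (2*k).factorial := by
      rw [Nat.factorial_succ]; push_cast; ring
    have h2 : ((2*k).factorial : ℝ) ≠ 0 := by positivity
    have h3 : ((k).factorial : ℝ) ≠ 0 := by positivity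
    have h4 : (2:ℝ)^(2*k+1) = 2 * (2^k)^2 := by rw [pow_succ, two_mul, pow_add]; ring
    have h5 : (2*(k:ℝ)+1) ≠ 0 := by positivity
    have h6 : ((-1:ℝ))^k * ((-1:ℝ))^k = 1 := by
      rw [← pow_add, ← two_mul, pow_mul]; norm_num
    rw [h1, h4]
    field_simp
    rw [sq, h6]

lemma legendre_orth (k l : ℕ) :
    ∫ x in (-1:ℝ)..1, (legendre k).eval x * (legendre l).eval x
      = (if k = l then 1 else 0) * (2/(2*(k:ℝ)+1)) := by
  rcases le_or_gt k l with h | h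
  · rw [legendre_orth_le h]
    by_cases hkl : k = l
    · subst hkl; simp
    · simp [hkl]
  · have : (∫ x in (-1:ℝ)..1, (legendre k).eval x * (legendre l).eval x)
        = ∫ x in (-1:ℝ)..1, (legendre l).eval x * (legendre k).eval x := by
      simp_rw [mul_comm]
    rw [this, legendre_orth_le (le_of_lt h)]
    simp [Nat.ne_of_lt h, (Nat.ne_of_lt h).symm, if_neg]

lemma shifted_orth (k l : ℕ) :
    ∫ x in (0:ℝ)..1, shiftedLegendre k x * shiftedLegendre l x
      = (if k = l then 1 else 0)/(2*(k:ℝ)+1) := by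
  set F : ℝ → ℝ := fun t => (legendre k).eval t * (legendre l).eval t with hF
  have hx : ∀ x:ℝ, shiftedLegendre k x * shiftedLegendre l x = F (2*x + (-1)) := by
    intro x; simp [_root_.shiftedLegendre, hF, sub_eq_add_neg]
  simp_rw [hx]
  rw [intervalIntegral.integral_comp_mul_add F two_ne_zero (-1)]
  norm_num
  rw [legendre_orth]
  by_cases hkl : k = l <;> simp [hkl] <;> ring

lemma Icc_top_split (a : ℕ) (h : 1 ≤ a + 1) (f : ℕ → ℝ) :
    ∑ j ∈ Finset.Icc 1 (a+1), f j = (∑ j ∈ Finset.Icc 1 a, f j) + f (a+1) :=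
  Finset.sum_Icc_succ_top h f

lemma weight_id (n : ℕ) (x : ℝ) :
    (1+x)^2 * transmutedWeight (2*n+1) x
      = 1 + (2*(n:ℝ)+2)*x^(2*n+1) + (2*(n:ℝ)+1)*x^(2*n+2) := by
  induction n with
  | zero => simp [transmutedWeight]; ring
  | succ n ih =>
    have hsplit : transmutedWeight (2*(n+1)+1) x
        = transmutedWeight (2*n+1) x
          + ((2*n+2 : ℕ) : ℝ) * (-x)^(2*n+1) + ((2*n+3 : ℕ) : ℝ) * (-x)^(2*n+2) := by
      rw [transmutedWeight, transmutedWeight,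
        show 2*(n+1)+1 = (2*n+2)+1 from by ring,
        Icc_top_split (2*n+2) (by omega), Icc_top_split (2*n+1) (by omega)]
      norm_num
      ring
    have hodd : (-x)^(2*n+1) = -(x^(2*n+1)) := Odd.neg_pow ⟨n, by ring⟩ x
    have heven : (-x)^(2*n+2) = x^(2*n+2) := Even.neg_pow ⟨n+1, by ring⟩ x
    rw [hsplit, hodd, heven]
    have e1 : x^(2*n+2) = x^(2*n+1) * x := by rw [pow_succ]
    have e2 : x^(2*(n+1)+1) = x^(2*n+1) * x^2 := by rw [← pow_add]; norm_num; ring_nf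
    have e3 : x^(2*(n+1)+2) = x^(2*n+1) * x^3 := by rw [← pow_add]; norm_num; ring_nf
    rw [mul_add, mul_add, ih, e1, e2, e3]
    push_cast
    ring

lemma weight_continuous (ν : ℕ) : Continuous (fun x : ℝ => transmutedWeight ν x) := by
  unfold transmutedWeight
  apply continuous_finset_sum
  intro j _
  fun_prop

lemma g_hasDerivAt (ν : ℕ) (x : ℝ) :
    HasDerivAt (fun x : ℝ => 1 + ∑ j ∈ Finset.Icc 1 ν, (-x) ^ j)
      (-(transmutedWeight ν x)) x := by
  have h : ∀ j ∈ Finset.Icc 1 ν, HasDerivAt (fun x : ℝ => (-x) ^ j)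
      (-((j:ℝ) * (-x)^(j-1))) x := by
    intro j _
    have h0 := ((hasDerivAt_id x).neg).pow j
    exact h0.congr_deriv (by simp only [Pi.neg_apply, id_eq]; ring)
  have hsum := HasDerivAt.sum h
  have := hsum.const_add (1:ℝ)
  simpa [transmutedWeight, Finset.sum_neg_distrib] using this

lemma g_zero (ν : ℕ) : (1 + ∑ j ∈ Finset.Icc 1 ν, (-(0:ℝ)) ^ j) = 1 := by
  rw [Finset.sum_eq_zero, add_zero]
  intro j hj
  simp only [Finset.mem_Icc] at hj
  rw [neg_zero, zero_pow (by omega)]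

lemma g_one (n : ℕ) : (1 + ∑ j ∈ Finset.Icc 1 (2*n+1), (-(1:ℝ)) ^ j) = 0 := by
  induction n with
  | zero => norm_num
  | succ n ih =>
    rw [show 2*(n+1)+1 = (2*n+2)+1 from by ring,
      Icc_top_split (2*n+2) (by omega), Icc_top_split (2*n+1) (by omega)]
    rw [show (-(1:ℝ))^((2*n+2)+1) = -1 from Odd.neg_one_pow ⟨n+1, by ring⟩,
      show (-(1:ℝ))^(2*n+2) = 1 from Even.neg_one_pow ⟨n+1, by ring⟩]
    linarith [ih]

lemma subst_integral (n : ℕ) (f : ℝ → ℝ) (hf : Continuous f) :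
    ∫ x in (0:ℝ)..1, transmutedWeight (2*n+1) x *
        f (1 + ∑ j ∈ Finset.Icc 1 (2*n+1), (-x) ^ j)
      = ∫ t in (0:ℝ)..1, f t := by
  set g : ℝ → ℝ := fun x => 1 + ∑ j ∈ Finset.Icc 1 (2*n+1), (-x) ^ j with hg
  have h := intervalIntegral.integral_comp_smul_deriv
    (f := g) (f' := fun x => -(transmutedWeight (2*n+1) x)) (g := f)
    (a := 0) (b := 1)
    (fun x _ => g_hasDerivAt (2*n+1) x)
    (((weight_continuous (2*n+1)).neg).continuousOn) hf
  have hg0 : g 0 = 1 := g_zero (2*n+1)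
  have hg1 : g 1 = 0 := g_one n
  rw [hg0, hg1] at h
  have h3 : (∫ t in (0:ℝ)..1, f t)
      = - ∫ x in (0:ℝ)..1, (fun x => -(transmutedWeight (2*n+1) x)) x • (f ∘ g) x := by
    rw [h, intervalIntegral.integral_symm 0 1, neg_neg]
  rw [h3, ← intervalIntegral.integral_neg]
  apply intervalIntegral.integral_congr
  intro x _
  simp only [hg, Function.comp, smul_eq_mul]
  ring

lemma transmuted_eq (ν k : ℕ) (x : ℝ) :
    transmutedLegendre ν k x = shiftedLegendre k (1 + ∑ j ∈ Finset.Icc 1 ν, (-x) ^ j) := by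
  rcases Nat.eq_zero_or_pos k with hk | hk
  · subst hk
    simp [transmutedLegendre, _root_.shiftedLegendre, legendre]
  · rw [transmutedLegendre, if_neg (Nat.pos_iff_ne_zero.mp hk)]

lemma shifted_continuous (k : ℕ) : Continuous (shiftedLegendre k) := by
  unfold _root_.shiftedLegendre
  exact (legendre k).continuous.comp (by fun_prop)


/-- Properties of the weight `w_ν` and orthogonality of the transmuted
Legendre polynomials for `ν = 2m - 1`:
`∫₀¹ w_ν(x) 𝒫_{νk}(x) 𝒫_{νl}(x) dx = δ_{kl}/(2k+1)`. -/
theorem transmutedLegendre_orthogonality (m : ℕ) (hm : 1 ≤ m) :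
    (∀ x ∈ Set.Icc (0:ℝ) 1, 0 < transmutedWeight (2 * m - 1) x) ∧
    transmutedWeight (2 * m - 1) 0 = 1 ∧
    transmutedWeight (2 * m - 1) 1 = m ∧
    ∀ k l : ℕ,
      ∫ x in (0:ℝ)..1,
          transmutedWeight (2 * m - 1) x * transmutedLegendre (2 * m - 1) k x *
            transmutedLegendre (2 * m - 1) l x =
        (if k = l then 1 else 0) / (2 * (k : ℝ) + 1) := by
  obtain ⟨n, rfl⟩ : ∃ n, m = n + 1 := ⟨m - 1, by omega⟩
  simp only [show 2 * (n + 1) - 1 = 2 * n + 1 from by omega]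
  refine ⟨?_, ?_, ?_, ?_⟩
  · intro x hx
    have hid := weight_id n x
    have h1 : (0:ℝ) ≤ x := hx.1
    have hp1 : (0:ℝ) ≤ x^(2*n+1) := pow_nonneg h1 _
    have hp2 : (0:ℝ) ≤ x^(2*n+2) := pow_nonneg h1 _
    have hc1 : (0:ℝ) ≤ (2*(n:ℝ)+2) * x^(2*n+1) := by positivity
    have hc2 : (0:ℝ) ≤ (2*(n:ℝ)+1) * x^(2*n+2) := by positivity
    have hA : 1 ≤ (1+x)^2 * transmutedWeight (2*n+1) x := by rw [hid]; linarith
    nlinarith [sq_nonneg (1+x), hA]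
  · have hid := weight_id n 0
    have e1 : (0:ℝ)^(2*n+1) = 0 := zero_pow (by omega)
    have e2 : (0:ℝ)^(2*n+2) = 0 := zero_pow (by omega)
    rw [e1, e2] at hid
    norm_num at hid
    exact hid
  · have hid := weight_id n 1
    norm_num at hid
    push_cast
    linarith
  · intro k l
    simp only [transmuted_eq]
    have hstep : (∫ x in (0:ℝ)..1,
        transmutedWeight (2*n+1) x *
          shiftedLegendre k (1 + ∑ j ∈ Finset.Icc 1 (2*n+1), (-x) ^ j) *
          shiftedLegendre l (1 + ∑ j ∈ Finset.Icc 1 (2*n+1), (-x) ^ j))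
        = ∫ x in (0:ℝ)..1, transmutedWeight (2*n+1) x *
            (fun t => shiftedLegendre k t * shiftedLegendre l t)
              (1 + ∑ j ∈ Finset.Icc 1 (2*n+1), (-x) ^ j) := by
      apply intervalIntegral.integral_congr
      intro x _; dsimp only; ring
    rw [hstep, subst_integral n (fun t => shiftedLegendre k t * shiftedLegendre l t) ((shifted_continuous k).mul (shifted_continuous l))]
    exact shifted_orth k l
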